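/- Let H be a finite graph, L a list-assignment with |L(v)| ≥ deg(v)+1 for every vertex v, and x any colour. If 𝛔 is a uniformly random proper L-colouring of H, then the probability that 𝛔(v) ≠ x for all v ∈ V(H) is at least ∏_{v∈V(H)} (1 - 1/(|L(v)| - deg(v))). -/

import Mathlib

namespace Stmt11

open Finset

variable {V : Type} [Fintype V] [DecidableEq V] (H : SimpleGraph V)
    [DecidableRel H.Adj] (L : V → Finset ℕ) (x : ℕ)

/-- Proper colourings avoiding `x` on the set `S`. -/
def AS (S : Finset V) : Finset (∀ v : V, {n // n ∈ L v}) :=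
  Finset.univ.filter (fun σ => (∀ u w : V, H.Adj u w → (σ u : ℕ) ≠ (σ w : ℕ)) ∧
    ∀ v ∈ S, (σ v : ℕ) ≠ x)

lemma step_nat (hL : ∀ v : V, H.degree v + 1 ≤ (L v).card) (S : Finset V) (v : V)
    (hv : v ∉ S) :
    ((AS H L x S).filter (fun σ => (σ v : ℕ) = x)).card * ((L v).card - H.degree v) ≤
      (AS H L x S).card := by
  classical
  set T := (AS H L x S).filter (fun σ => (σ v : ℕ) = x) with hT
  set B := (AS H L x S).filter (fun σ => ¬ (σ v : ℕ) = x) with hB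
  have hsplit : T.card + B.card = (AS H L x S).card :=
    Finset.card_filter_add_card_filter_not _
  have hk1 : 1 ≤ (L v).card - H.degree v := by have := hL v; omega
  -- the fibers
  set D : (∀ v : V, {n // n ∈ L v}) → Finset (∀ v : V, {n // n ∈ L v}) :=
    fun σ => B.filter (fun σ' => ∀ u : V, u ≠ v → σ' u = σ u) with hD
  have claim1 : ∀ σ ∈ T, (L v).card - H.degree v - 1 ≤ (D σ).card := by
    intro σ hσ
    simp only [hT, Finset.mem_filter, AS, Finset.mem_univ, true_and] at hσ
    obtain ⟨⟨hprop, havoid⟩, hσv⟩ := hσ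
    set E : Finset {n // n ∈ L v} := Finset.univ.filter
      (fun c => (c : ℕ) ≠ x ∧ ∀ u : V, H.Adj v u → (c : ℕ) ≠ (σ u : ℕ)) with hE
    have hEcard : (L v).card - H.degree v - 1 ≤ E.card := by
      set Ebad : Finset {n // n ∈ L v} := Finset.univ.filter
        (fun c => ¬ ((c : ℕ) ≠ x ∧ ∀ u : V, H.Adj v u → (c : ℕ) ≠ (σ u : ℕ))) with hEbad
      have hsplitE : E.card + Ebad.card = Fintype.card {n // n ∈ L v} := by
        rw [← Finset.card_univ]
        exact Finset.card_filter_add_card_filter_not _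
      have hcoe : Fintype.card {n // n ∈ L v} = (L v).card := Fintype.card_coe _
      have hbad : Ebad.card ≤ H.degree v + 1 := by
        have hinj : ∀ c ∈ Ebad, (c : ℕ) ∈
            insert x ((H.neighborFinset v).image (fun u => (σ u : ℕ))) := by
          intro c hc
          simp only [hEbad, Finset.mem_filter, Finset.mem_univ, true_and, not_and,
            not_forall, ne_eq, not_not] at hc
          by_cases hcx : (c : ℕ) = x
          · simp [hcx]
          · obtain ⟨u, hu, hcu⟩ := hc hcx
            simp only [Finset.mem_insert, Finset.mem_image, SimpleGraph.mem_neighborFinset]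
            exact Or.inr ⟨u, hu, hcu.symm⟩
        calc Ebad.card ≤ (insert x ((H.neighborFinset v).image (fun u => (σ u : ℕ)))).card :=
              Finset.card_le_card_of_injOn _ hinj
                (fun a _ b _ h => Subtype.ext h)
          _ ≤ ((H.neighborFinset v).image (fun u => (σ u : ℕ))).card + 1 :=
              Finset.card_insert_le _ _
          _ ≤ (H.neighborFinset v).card + 1 := by
              exact Nat.add_le_add_right (Finset.card_image_le) 1
          _ = H.degree v + 1 := by rw [H.card_neighborFinset_eq_degree]
      omega
    -- inject E into D σ via update
    have himg : ∀ c ∈ E, Function.update σ v c ∈ D σ := by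
      intro c hc
      simp only [hE, Finset.mem_filter, Finset.mem_univ, true_and] at hc
      obtain ⟨hcx, hcadj⟩ := hc
      simp only [hD, Finset.mem_filter, hB, AS, Finset.mem_univ, true_and]
      refine ⟨⟨⟨?_, ?_⟩, ?_⟩, ?_⟩
      · intro u w hadj
        by_cases huv : u = v
        · subst huv
          have hwv : w ≠ u := fun h => H.irrefl (h ▸ hadj)
          rw [Function.update_self, Function.update_of_ne hwv]
          exact hcadj w hadj
        · by_cases hwv : w = v
          · subst hwv
            rw [Function.update_self, Function.update_of_ne huv]
            exact fun h => hcadj u (H.adj_symm hadj) h.symm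
          · rw [Function.update_of_ne huv, Function.update_of_ne hwv]
            exact hprop u w hadj
      · intro u hu
        have huv : u ≠ v := fun h => hv (h ▸ hu)
        rw [Function.update_of_ne huv]
        exact havoid u hu
      · rw [Function.update_self]; exact hcx
      · intro u hu
        rw [Function.update_of_ne hu]
    have hinj2 : Set.InjOn (fun c => Function.update σ v c) E := by
      intro a _ b _ h
      have := congrFun h v
      simpa using this
    exact hEcard.trans
      (Finset.card_le_card_of_injOn (fun c => Function.update σ v c) himg hinj2)
  have claim2 : ∀ σ₁ ∈ T, ∀ σ₂ ∈ T, σ₁ ≠ σ₂ → Disjoint (D σ₁) (D σ₂) := by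
    intro σ₁ h₁ σ₂ h₂ hne
    rw [Finset.disjoint_left]
    intro σ' hs1 hs2
    simp only [hD, Finset.mem_filter] at hs1 hs2
    apply hne
    funext u
    by_cases huv : u = v
    · subst huv
      simp only [hT, Finset.mem_filter] at h₁ h₂
      exact Subtype.ext (h₁.2.trans h₂.2.symm)
    · exact (hs1.2 u huv).symm.trans (hs2.2 u huv)
  have hunion : (T.biUnion D).card ≤ B.card := by
    apply Finset.card_le_card
    intro τ hτ
    obtain ⟨σ, _, hτσ⟩ := Finset.mem_biUnion.mp hτ
    exact (Finset.mem_filter.mp hτσ).1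
  have hsum : T.card * ((L v).card - H.degree v - 1) ≤ (T.biUnion D).card := by
    rw [Finset.card_biUnion claim2]
    calc T.card * ((L v).card - H.degree v - 1)
        = ∑ _σ ∈ T, ((L v).card - H.degree v - 1) := by
          rw [Finset.sum_const, smul_eq_mul]
      _ ≤ ∑ σ ∈ T, (D σ).card := Finset.sum_le_sum claim1
  have hTle : T.card ≤ (AS H L x S).card := by
    rw [← hsplit]; omega
  have hmul : T.card * ((L v).card - H.degree v) =
      T.card * ((L v).card - H.degree v - 1) + T.card := by
    conv_lhs => rw [show (L v).card - H.degree v = ((L v).card - H.degree v - 1) + 1 from by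
      omega]
    ring
  omega

lemma step_real (hL : ∀ v : V, H.degree v + 1 ≤ (L v).card) (S : Finset V) (v : V)
    (hv : v ∉ S) :
    (1 - 1 / (((L v).card : ℝ) - H.degree v)) * (AS H L x S).card ≤
      (AS H L x (insert v S)).card := by
  classical
  have hAins : AS H L x (insert v S) = (AS H L x S).filter (fun σ => ¬ (σ v : ℕ) = x) := by
    ext σ
    simp only [AS, Finset.mem_filter, Finset.mem_univ, true_and, Finset.mem_insert]
    constructor
    · rintro ⟨hp, ha⟩
      exact ⟨⟨hp, fun u hu => ha u (Or.inr hu)⟩, ha v (Or.inl rfl)⟩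
    · rintro ⟨⟨hp, ha⟩, hx⟩
      refine ⟨hp, fun u hu => ?_⟩
      rcases hu with rfl | hu
      · exact hx
      · exact ha u hu
  set T := (AS H L x S).filter (fun σ => (σ v : ℕ) = x) with hT
  set B := (AS H L x S).filter (fun σ => ¬ (σ v : ℕ) = x) with hB
  have hsplit : T.card + B.card = (AS H L x S).card :=
    Finset.card_filter_add_card_filter_not _
  have hnat := step_nat H L x hL S v hv
  have hdeg := hL v
  have hdeg' : H.degree v ≤ (L v).card := le_trans (Nat.le_succ _) hdeg
  have hkR : ((L v).card : ℝ) - H.degree v = (((L v).card - H.degree v : ℕ) : ℝ) := by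
    push_cast [Nat.cast_sub hdeg']
    ring
  have hk1 : (1 : ℝ) ≤ ((L v).card : ℝ) - H.degree v := by
    rw [hkR]
    exact_mod_cast Nat.le_sub_of_add_le (by rw [Nat.add_comm]; exact hdeg)
  have hk0 : (0 : ℝ) < ((L v).card : ℝ) - H.degree v := lt_of_lt_of_le one_pos hk1
  have hnatR : (T.card : ℝ) * (((L v).card : ℝ) - H.degree v) ≤ ((AS H L x S).card : ℝ) := by
    rw [hkR]
    exact_mod_cast hnat
  have hsplitR : (T.card : ℝ) + B.card = (AS H L x S).card := by exact_mod_cast hsplit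
  rw [hAins]
  have h1k : (0:ℝ) < 1 / (((L v).card : ℝ) - H.degree v) := by positivity
  have hTr : (T.card : ℝ) ≤
      1 / (((L v).card : ℝ) - H.degree v) * ((AS H L x S).card : ℝ) := by
    have h2 := mul_le_mul_of_nonneg_left hnatR (le_of_lt h1k)
    have h3 : 1 / (((L v).card : ℝ) - H.degree v) *
        ((T.card : ℝ) * (((L v).card : ℝ) - H.degree v)) = (T.card : ℝ) := by
      field_simp
    rw [h3] at h2
    exact h2
  rw [sub_mul, one_mul]
  linarith [hTr, hsplitR]

lemma main_lemma (hL : ∀ v : V, H.degree v + 1 ≤ (L v).card) (S : Finset V) :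
    (∏ v ∈ S, (1 - 1 / (((L v).card : ℝ) - H.degree v))) * ((AS H L x ∅).card : ℝ) ≤
      ((AS H L x S).card : ℝ) := by
  classical
  induction S using Finset.induction_on with
  | empty => simp
  | @insert v S hv ih =>
    have hdeg := hL v
    have hk1 : (1 : ℝ) ≤ ((L v).card : ℝ) - H.degree v := by
      have : (H.degree v : ℝ) + 1 ≤ (L v).card := by exact_mod_cast hdeg
      linarith
    have hfac : (0 : ℝ) ≤ 1 - 1 / (((L v).card : ℝ) - H.degree v) := by
      have hk0 : (0 : ℝ) < ((L v).card : ℝ) - H.degree v := lt_of_lt_of_le one_pos hk1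
      have : 1 / (((L v).card : ℝ) - H.degree v) ≤ 1 := by
        rw [div_le_one hk0]; linarith
      linarith
    rw [Finset.prod_insert hv, mul_assoc]
    calc (1 - 1 / (((L v).card : ℝ) - H.degree v)) *
          ((∏ v ∈ S, (1 - 1 / (((L v).card : ℝ) - H.degree v))) * ((AS H L x ∅).card : ℝ))
        ≤ (1 - 1 / (((L v).card : ℝ) - H.degree v)) * ((AS H L x S).card : ℝ) :=
          mul_le_mul_of_nonneg_left ih hfac
      _ ≤ ((AS H L x (insert v S)).card : ℝ) := step_real H L x hL S v hv

lemma exists_proper (hL : ∀ v : V, H.degree v + 1 ≤ (L v).card) :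
    ∃ σ : ∀ v : V, {n // n ∈ L v}, ∀ u w : V, H.Adj u w → (σ u : ℕ) ≠ (σ w : ℕ) := by
  classical
  have hne : ∀ v : V, (L v).Nonempty := by
    intro v
    rw [← Finset.card_pos]
    have := hL v; omega
  have key : ∀ S : Finset V, ∃ σ : ∀ v : V, {n // n ∈ L v},
      ∀ u ∈ S, ∀ w ∈ S, H.Adj u w → (σ u : ℕ) ≠ (σ w : ℕ) := by
    intro S
    induction S using Finset.induction_on with
    | empty => exact ⟨fun v => ⟨(L v).min' (hne v), Finset.min'_mem _ _⟩, by simp⟩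
    | @insert v S hv ih =>
      obtain ⟨σ, hσ⟩ := ih
      have hF : ((L v) \ ((H.neighborFinset v).image (fun u => (σ u : ℕ)))).Nonempty := by
        rw [← Finset.card_pos]
        have h1 : ((H.neighborFinset v).image (fun u => (σ u : ℕ))).card ≤ H.degree v := by
          calc ((H.neighborFinset v).image (fun u => (σ u : ℕ))).card
              ≤ (H.neighborFinset v).card := Finset.card_image_le
            _ = H.degree v := H.card_neighborFinset_eq_degree v
        have h2 := Finset.le_card_sdiff ((H.neighborFinset v).image (fun u => (σ u : ℕ))) (L v)
        have := hL v
        omega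
      obtain ⟨c, hc⟩ := hF
      rw [Finset.mem_sdiff] at hc
      refine ⟨Function.update σ v ⟨c, hc.1⟩, ?_⟩
      intro u hu w hw hadj
      have hcn : ∀ u : V, H.Adj v u → c ≠ (σ u : ℕ) := by
        intro u hu hc'
        exact hc.2 (Finset.mem_image.mpr ⟨u, (SimpleGraph.mem_neighborFinset _ _ _).mpr hu,
          hc'.symm⟩)
      by_cases huv : u = v
      · subst huv
        have hwv : w ≠ u := fun h => H.irrefl (h ▸ hadj)
        rw [Function.update_self, Function.update_of_ne hwv]
        exact hcn w hadj
      · by_cases hwv : w = v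
        · subst hwv
          rw [Function.update_self, Function.update_of_ne huv]
          exact fun h => hcn u (H.adj_symm hadj) h.symm
        · rw [Function.update_of_ne huv, Function.update_of_ne hwv]
          exact hσ u ((Finset.mem_insert.mp hu).resolve_left huv) w
            ((Finset.mem_insert.mp hw).resolve_left hwv) hadj
  obtain ⟨σ, hσ⟩ := key Finset.univ
  exact ⟨σ, fun u w h => hσ u (Finset.mem_univ u) w (Finset.mem_univ w) h⟩

end Stmt11

theorem stmt_11 (V : Type) [Fintype V] [DecidableEq V] (H : SimpleGraph V)
    [DecidableRel H.Adj] (L : V → Finset ℕ)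
    (hL : ∀ v : V, H.degree v + 1 ≤ (L v).card) (x : ℕ) :
    ∏ v : V, (1 - 1 / (((L v).card : ℝ) - H.degree v)) ≤
      (((Finset.univ.filter (fun σ : ∀ v : V, {n // n ∈ L v} =>
          (∀ u w : V, H.Adj u w → (σ u : ℕ) ≠ (σ w : ℕ)) ∧
            ∀ v : V, (σ v : ℕ) ≠ x)).card : ℝ)) /
        ((Finset.univ.filter (fun σ : ∀ v : V, {n // n ∈ L v} =>
          ∀ u w : V, H.Adj u w → (σ u : ℕ) ≠ (σ w : ℕ))).card : ℝ) := by
  classical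
  have hAe : (Stmt11.AS H L x ∅).card =
      (Finset.univ.filter (fun σ : ∀ v : V, {n // n ∈ L v} =>
        ∀ u w : V, H.Adj u w → (σ u : ℕ) ≠ (σ w : ℕ))).card := by
    congr 1
    ext σ
    simp [Stmt11.AS]
  have hAu : (Stmt11.AS H L x Finset.univ).card =
      (Finset.univ.filter (fun σ : ∀ v : V, {n // n ∈ L v} =>
        (∀ u w : V, H.Adj u w → (σ u : ℕ) ≠ (σ w : ℕ)) ∧
          ∀ v : V, (σ v : ℕ) ≠ x)).card := by
    congr 1
    ext σ
    simp [Stmt11.AS]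
  have hPpos : 0 < (Finset.univ.filter (fun σ : ∀ v : V, {n // n ∈ L v} =>
      ∀ u w : V, H.Adj u w → (σ u : ℕ) ≠ (σ w : ℕ))).card := by
    obtain ⟨σ, hσ⟩ := Stmt11.exists_proper H L hL
    exact Finset.card_pos.mpr ⟨σ, Finset.mem_filter.mpr ⟨Finset.mem_univ σ, hσ⟩⟩
  rw [le_div_iff₀ (by exact_mod_cast hPpos)]
  have := Stmt11.main_lemma H L x hL Finset.univ
  rw [hAe, hAu] at this
  exact this
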